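/- Let A and B be types, let M_A and M_B be Coxeter matrices on A and B respectively, let C ⊆ A and C ⊆ B be a common subset with M_A and M_B agreeing on C, and let M be the Coxeter matrix on the union S = A ∪ B that restricts to M_A on A, to M_B on B, and has M a b = 0 for every a ∈ A ∖ B and b ∈ B ∖ A. Then the Coxeter group W(M) is isomorphic to the amalgamated free product W(M|_A) ∗_{W(M|_C)} W(M|_B), i.e. to the pushout of the canonical group homomorphisms W(M|_C) → W(M|_A) and W(M|_C) → W(M|_B) induced by the inclusions of generating sets, via an isomorphism matching generators with generators. -/

import Mathlib

/-- The restriction of a Coxeter matrix on `S` to a subset `T ⊆ S`. -/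
def CoxeterMatrix.restrict {S : Type*} (M : CoxeterMatrix S) (T : Set S) :
    CoxeterMatrix T where
  M := fun a b => M a.1 b.1
  isSymm := Matrix.IsSymm.ext fun a b => M.symmetric b.1 a.1
  diagonal := fun a => M.diagonal a.1
  off_diagonal := fun a b hab => M.off_diagonal a.1 b.1 fun h => hab (Subtype.ext h)

/-- The canonical group homomorphism `W(M|_T) →* W(M|_T')` induced by an inclusion
`T ⊆ T'` of generating sets: it sends a simple reflection to a simple reflection. -/
def coxeterParabolicMap {S : Type*} (M : CoxeterMatrix S) {T T' : Set S} (h : T ⊆ T') :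
    (M.restrict T).Group →* (M.restrict T').Group :=
  (M.restrict T).toCoxeterSystem.lift
    ⟨fun c => (M.restrict T').simple ⟨c.1, h c.2⟩,
     fun i i' =>
       (M.restrict T').toCoxeterSystem.simple_mul_simple_pow ⟨i.1, h i.2⟩ ⟨i'.1, h i'.2⟩⟩

/-- The `Bool`-indexed family consisting of the two groups `W(M|_A)` and `W(M|_B)`. -/
def coxeterPushoutFam {S : Type*} (M : CoxeterMatrix S) (A B : Set S) : Bool → Type _
  | true => (M.restrict A).Group
  | false => (M.restrict B).Group

instance {S : Type*} (M : CoxeterMatrix S) (A B : Set S) :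
    ∀ b, Group (coxeterPushoutFam M A B b)
  | true => inferInstanceAs (Group (M.restrict A).Group)
  | false => inferInstanceAs (Group (M.restrict B).Group)

/-- The two canonical homomorphisms `W(M|_{A ∩ B}) →* W(M|_A)` and
`W(M|_{A ∩ B}) →* W(M|_B)` induced by the inclusions of generating sets. -/
def coxeterPushoutMaps {S : Type*} (M : CoxeterMatrix S) (A B : Set S) :
    ∀ b : Bool, (M.restrict (A ∩ B)).Group →* coxeterPushoutFam M A B b
  | true => coxeterParabolicMap M Set.inter_subset_left
  | false => coxeterParabolicMap M Set.inter_subset_right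


/-- Inclusion of a standard parabolic into the full Coxeter group. -/
def coxIncl {S : Type*} (M : CoxeterMatrix S) (T : Set S) :
    (M.restrict T).Group →* M.Group :=
  (M.restrict T).toCoxeterSystem.lift
    ⟨fun c => M.simple c.1,
     fun i i' => M.toCoxeterSystem.simple_mul_simple_pow i.1 i'.1⟩

theorem coxIncl_simple {S : Type*} (M : CoxeterMatrix S) (T : Set S) (c : T) :
    coxIncl M T ((M.restrict T).simple c) = M.simple c.1 :=
  (M.restrict T).toCoxeterSystem.lift_apply_simple _ c

theorem coxeterParabolicMap_simple {S : Type*} (M : CoxeterMatrix S) {T T' : Set S}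
    (h : T ⊆ T') (c : T) :
    coxeterParabolicMap M h ((M.restrict T).simple c) =
      (M.restrict T').simple ⟨c.1, h c.2⟩ :=
  (M.restrict T).toCoxeterSystem.lift_apply_simple _ c

/-- Let `M` be a Coxeter matrix on `S`, and let `A, B ⊆ S` with
`A ∪ B = S` and `M a b = 0` for every `a ∈ A \ B` and `b ∈ B \ A`. Then the Coxeter group
`W(M)` is isomorphic to the amalgamated free product `W(M|_A) ∗_{W(M|_{A ∩ B})} W(M|_B)`,
i.e. to the pushout of the canonical homomorphisms `W(M|_{A ∩ B}) → W(M|_A)` and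
`W(M|_{A ∩ B}) → W(M|_B)`, via an isomorphism matching generators with generators. -/
theorem coxeterGroup_amalgam_of_separating_subset
    {S : Type*} (M : CoxeterMatrix S) (A B : Set S)
    (hunion : A ∪ B = Set.univ)
    (hzero : ∀ a ∈ A \ B, ∀ b ∈ B \ A, M a b = 0) :
    ∃ e : M.Group ≃* Monoid.PushoutI (coxeterPushoutMaps M A B),
      (∀ (a : S) (ha : a ∈ A),
        e (M.simple a) =
          Monoid.PushoutI.of (φ := coxeterPushoutMaps M A B) true
            ((M.restrict A).simple ⟨a, ha⟩)) ∧
      (∀ (b : S) (hb : b ∈ B),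
        e (M.simple b) =
          Monoid.PushoutI.of (φ := coxeterPushoutMaps M A B) false
            ((M.restrict B).simple ⟨b, hb⟩)) := by
    classical
  have hB : ∀ s : S, s ∉ A → s ∈ B := fun s hs =>
    ((Set.mem_union s A B).mp (hunion ▸ Set.mem_univ s)).resolve_left hs
  have key : ∀ (s : S) (ha : s ∈ A) (hb : s ∈ B),
      Monoid.PushoutI.of (φ := coxeterPushoutMaps M A B) true ((M.restrict A).simple ⟨s, ha⟩)
        = Monoid.PushoutI.of (φ := coxeterPushoutMaps M A B) false
            ((M.restrict B).simple ⟨s, hb⟩) := by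
    intro s ha hb
    have e1 : (coxeterPushoutMaps M A B true) ((M.restrict (A ∩ B)).simple ⟨s, ⟨ha, hb⟩⟩)
        = (M.restrict A).simple ⟨s, ha⟩ :=
      coxeterParabolicMap_simple M Set.inter_subset_left ⟨s, ⟨ha, hb⟩⟩
    have e2 : (coxeterPushoutMaps M A B false) ((M.restrict (A ∩ B)).simple ⟨s, ⟨ha, hb⟩⟩)
        = (M.restrict B).simple ⟨s, hb⟩ :=
      coxeterParabolicMap_simple M Set.inter_subset_right ⟨s, ⟨ha, hb⟩⟩
    calc Monoid.PushoutI.of (φ := coxeterPushoutMaps M A B) true ((M.restrict A).simple ⟨s, ha⟩)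
        = Monoid.PushoutI.of (φ := coxeterPushoutMaps M A B) true
            ((coxeterPushoutMaps M A B true) ((M.restrict (A ∩ B)).simple ⟨s, ⟨ha, hb⟩⟩)) := by
          rw [e1]
      _ = Monoid.PushoutI.base (coxeterPushoutMaps M A B)
            ((M.restrict (A ∩ B)).simple ⟨s, ⟨ha, hb⟩⟩) :=
          Monoid.PushoutI.of_apply_eq_base (φ := coxeterPushoutMaps M A B) true _
      _ = Monoid.PushoutI.of (φ := coxeterPushoutMaps M A B) false
            ((coxeterPushoutMaps M A B false) ((M.restrict (A ∩ B)).simple ⟨s, ⟨ha, hb⟩⟩)) :=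
          (Monoid.PushoutI.of_apply_eq_base (φ := coxeterPushoutMaps M A B) false _).symm
      _ = Monoid.PushoutI.of (φ := coxeterPushoutMaps M A B) false
            ((M.restrict B).simple ⟨s, hb⟩) := by rw [e2]
  set ψ : S → Monoid.PushoutI (coxeterPushoutMaps M A B) := fun s =>
    if h : s ∈ A then
      Monoid.PushoutI.of (φ := coxeterPushoutMaps M A B) true ((M.restrict A).simple ⟨s, h⟩)
    else
      Monoid.PushoutI.of (φ := coxeterPushoutMaps M A B) false
        ((M.restrict B).simple ⟨s, hB s h⟩) with hψdef
  have hψA : ∀ (s : S) (h : s ∈ A), ψ s =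
      Monoid.PushoutI.of (φ := coxeterPushoutMaps M A B) true ((M.restrict A).simple ⟨s, h⟩) :=
    fun s h => dif_pos h
  have hψB : ∀ (s : S) (h : s ∈ B), ψ s =
      Monoid.PushoutI.of (φ := coxeterPushoutMaps M A B) false
        ((M.restrict B).simple ⟨s, h⟩) := by
    intro s h
    by_cases ha : s ∈ A
    · rw [hψA s ha, key s ha h]
    · exact dif_neg ha
  have relA : ∀ (s t : S) (hs : s ∈ A) (ht : t ∈ A),
      (Monoid.PushoutI.of (φ := coxeterPushoutMaps M A B) true ((M.restrict A).simple ⟨s, hs⟩) *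
       Monoid.PushoutI.of (φ := coxeterPushoutMaps M A B) true ((M.restrict A).simple ⟨t, ht⟩))
        ^ M s t = 1 := by
    intro s t hs ht
    have h1 : ((M.restrict A).simple ⟨s, hs⟩ * (M.restrict A).simple ⟨t, ht⟩) ^ M s t = 1 :=
      (M.restrict A).toCoxeterSystem.simple_mul_simple_pow ⟨s, hs⟩ ⟨t, ht⟩
    exact ((congrArg (· ^ M s t) (map_mul (Monoid.PushoutI.of (φ := coxeterPushoutMaps M A B) true) ((M.restrict A).simple ⟨s, hs⟩)
      ((M.restrict A).simple ⟨t, ht⟩)).symm).trans ((map_pow (Monoid.PushoutI.of (φ := coxeterPushoutMaps M A B) true) _ _).symm.trans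
        (congrArg (Monoid.PushoutI.of (φ := coxeterPushoutMaps M A B) true) h1))).trans (map_one (Monoid.PushoutI.of (φ := coxeterPushoutMaps M A B) true))
  have relB : ∀ (s t : S) (hs : s ∈ B) (ht : t ∈ B),
      (Monoid.PushoutI.of (φ := coxeterPushoutMaps M A B) false ((M.restrict B).simple ⟨s, hs⟩) *
       Monoid.PushoutI.of (φ := coxeterPushoutMaps M A B) false ((M.restrict B).simple ⟨t, ht⟩))
        ^ M s t = 1 := by
    intro s t hs ht
    have h1 : ((M.restrict B).simple ⟨s, hs⟩ * (M.restrict B).simple ⟨t, ht⟩) ^ M s t = 1 :=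
      (M.restrict B).toCoxeterSystem.simple_mul_simple_pow ⟨s, hs⟩ ⟨t, ht⟩
    exact ((congrArg (· ^ M s t) (map_mul (Monoid.PushoutI.of (φ := coxeterPushoutMaps M A B) false) ((M.restrict B).simple ⟨s, hs⟩)
      ((M.restrict B).simple ⟨t, ht⟩)).symm).trans ((map_pow (Monoid.PushoutI.of (φ := coxeterPushoutMaps M A B) false) _ _).symm.trans
        (congrArg (Monoid.PushoutI.of (φ := coxeterPushoutMaps M A B) false) h1))).trans (map_one (Monoid.PushoutI.of (φ := coxeterPushoutMaps M A B) false))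
  have hlift : ∀ s t : S, (ψ s * ψ t) ^ M s t = 1 := by
    intro s t
    by_cases hsA : s ∈ A <;> by_cases htA : t ∈ A
    · rw [hψA s hsA, hψA t htA]; exact relA s t hsA htA
    · by_cases hsB : s ∈ B
      · rw [hψB s hsB, hψB t (hB t htA)]; exact relB s t hsB (hB t htA)
      · rw [hzero s ⟨hsA, hsB⟩ t ⟨hB t htA, htA⟩, pow_zero]
    · by_cases htB : t ∈ B
      · rw [hψB s (hB s hsA), hψB t htB]; exact relB s t (hB s hsA) htB
      · have h0 : M t s = 0 := hzero t ⟨htA, htB⟩ s ⟨hB s hsA, hsA⟩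
        rw [M.symmetric s t, h0, pow_zero]
    · rw [hψB s (hB s hsA), hψB t (hB t htA)]; exact relB s t (hB s hsA) (hB t htA)
  let f : M.Group →* Monoid.PushoutI (coxeterPushoutMaps M A B) :=
    M.toCoxeterSystem.lift ⟨ψ, hlift⟩
  have hf : ∀ s : S, f (M.simple s) = ψ s := fun s =>
    M.toCoxeterSystem.lift_apply_simple _ s
  let gs : ∀ i : Bool, coxeterPushoutFam M A B i →* M.Group := fun i =>
    match i with
    | true => coxIncl M A
    | false => coxIncl M B
  have compat : ∀ i : Bool,
      (gs i).comp (coxeterPushoutMaps M A B i) = coxIncl M (A ∩ B) := by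
    intro i
    cases i
    · apply (M.restrict (A ∩ B)).toCoxeterSystem.ext_simple
      intro c
      show coxIncl M B (coxeterParabolicMap M Set.inter_subset_right
        ((M.restrict (A ∩ B)).simple c)) = coxIncl M (A ∩ B) ((M.restrict (A ∩ B)).simple c)
      rw [coxeterParabolicMap_simple, coxIncl_simple, coxIncl_simple]
    · apply (M.restrict (A ∩ B)).toCoxeterSystem.ext_simple
      intro c
      show coxIncl M A (coxeterParabolicMap M Set.inter_subset_left
        ((M.restrict (A ∩ B)).simple c)) = coxIncl M (A ∩ B) ((M.restrict (A ∩ B)).simple c)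
      rw [coxeterParabolicMap_simple, coxIncl_simple, coxIncl_simple]
  let g : Monoid.PushoutI (coxeterPushoutMaps M A B) →* M.Group :=
    Monoid.PushoutI.lift gs (coxIncl M (A ∩ B)) compat
  have hgf : g.comp f = MonoidHom.id _ := by
    apply M.toCoxeterSystem.ext_simple
    intro s
    show g (f (M.simple s)) = M.simple s
    rw [hf s]
    by_cases h : s ∈ A
    · rw [hψA s h]
      exact (Monoid.PushoutI.lift_of gs (coxIncl M (A ∩ B)) compat _).trans
        (coxIncl_simple M A ⟨s, h⟩)
    · rw [hψB s (hB s h)]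
      exact (Monoid.PushoutI.lift_of gs (coxIncl M (A ∩ B)) compat _).trans
        (coxIncl_simple M B ⟨s, hB s h⟩)
  have hfg : f.comp g = MonoidHom.id _ := by
    apply Monoid.PushoutI.hom_ext_nonempty
    intro i
    cases i
    · apply (M.restrict B).toCoxeterSystem.ext_simple
      intro c
      show f (g (Monoid.PushoutI.of (φ := coxeterPushoutMaps M A B) false
        ((M.restrict B).simple c))) =
        Monoid.PushoutI.of (φ := coxeterPushoutMaps M A B) false ((M.restrict B).simple c)
      rw [show g (Monoid.PushoutI.of (φ := coxeterPushoutMaps M A B) false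
          ((M.restrict B).simple c)) = M.simple c.1 from
        (Monoid.PushoutI.lift_of gs (coxIncl M (A ∩ B)) compat _).trans (coxIncl_simple M B c)]
      rw [hf c.1, hψB c.1 c.2]
    · apply (M.restrict A).toCoxeterSystem.ext_simple
      intro c
      show f (g (Monoid.PushoutI.of (φ := coxeterPushoutMaps M A B) true
        ((M.restrict A).simple c))) =
        Monoid.PushoutI.of (φ := coxeterPushoutMaps M A B) true ((M.restrict A).simple c)
      rw [show g (Monoid.PushoutI.of (φ := coxeterPushoutMaps M A B) true
          ((M.restrict A).simple c)) = M.simple c.1 from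
        (Monoid.PushoutI.lift_of gs (coxIncl M (A ∩ B)) compat _).trans (coxIncl_simple M A c)]
      rw [hf c.1, hψA c.1 c.2]
  refine ⟨MonoidHom.toMulEquiv f g hgf hfg, ?_, ?_⟩
  · intro a ha
    show f (M.simple a) = _
    rw [hf a, hψA a ha]
  · intro b hb
    show f (M.simple b) = _
    rw [hf b, hψB b hb]
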